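/- Let n ≥ 0 and let J be a small category such that A has colimits of shape J (so that Fct(C, A) has colimits of shape J, computed objectwise). If D : J → Fct(C, A) is a diagram such that D(j) ∈ Pol_n for every object j of J, then the colimit of D belongs to Pol_n; that is, the class Pol_n of strong polynomial functors of degree ≤ n is closed under colimits. -/

import Mathlib

open CategoryTheory CategoryTheory.Limits CategoryTheory.MonoidalCategory

variable {C : Type*} [Category C] [MonoidalCategory C]
variable {A : Type*} [Category A] [Abelian A]

/-- The translation endofunctor `τ_x` of `Fct(C, A)`: precomposition with `x ⊗ -`. -/
noncomputable def tauF (A : Type*) [Category A] (x : C) : (C ⥤ A) ⥤ (C ⥤ A) :=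
  (Functor.whiskeringLeft C C A).obj (tensorLeft x)

/-- The component `i_x(F) : F ⟶ τ_x F`, whose component at `c` is
`F` applied to `c ≅ 𝟙 ⊗ c ⟶ x ⊗ c`. -/
def iApp (hI : IsInitial (𝟙_ C)) (x : C) (F : C ⥤ A) : F ⟶ tensorLeft x ⋙ F where
  app c := F.map ((λ_ c).inv ≫ hI.to x ▷ c)
  naturality c c' f := by
    dsimp
    rw [← F.map_comp, ← F.map_comp]
    congr 1
    rw [leftUnitor_inv_naturality_assoc, whisker_exchange, Category.assoc]

/-- The natural transformation `i_x : Id ⟶ τ_x` of endofunctors of `Fct(C, A)`. -/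
noncomputable def iNT (hI : IsInitial (𝟙_ C)) (x : C) :
    𝟭 (C ⥤ A) ⟶ tauF A x where
  app F := iApp hI x F
  naturality F G η := by
    ext c
    exact (η.naturality _).symm

/-- The evanescence endofunctor `κ_x = ker(i_x)` of `Fct(C, A)`. -/
noncomputable def kappaF (hI : IsInitial (𝟙_ C)) (x : C) : (C ⥤ A) ⥤ (C ⥤ A) :=
  kernel (iNT (A := A) hI x)

/-- The difference endofunctor `δ_x = coker(i_x)` of `Fct(C, A)`. -/
noncomputable def deltaF (hI : IsInitial (𝟙_ C)) (x : C) : (C ⥤ A) ⥤ (C ⥤ A) :=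
  cokernel (iNT (A := A) hI x)

/-- `PolAux hI (n+1) F` says that `F` is strong polynomial of degree `≤ n`;
`PolAux hI 0 F` says that `F` is the zero functor (degree `≤ -1`). -/
def PolAux (hI : IsInitial (𝟙_ C)) : ℕ → (C ⥤ A) → Prop
  | 0 => fun F => IsZero F
  | n + 1 => fun F => ∀ x : C, PolAux hI n ((deltaF hI x).obj F)

/-- `Pol hI n F` : `F` is strong polynomial of degree `≤ n` (with `Pol_m = {0}` for `m < 0`). -/
def Pol (hI : IsInitial (𝟙_ C)) (n : ℤ) (F : C ⥤ A) : Prop :=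
  PolAux hI (n + 1).toNat F

section Aux

lemma polAux_of_iso (hI : IsInitial (𝟙_ C)) :
    ∀ (n : ℕ) {F G : C ⥤ A}, (F ≅ G) → PolAux hI n F → PolAux hI n G
  | 0 => fun e h => h.of_iso e.symm
  | n + 1 => fun e h x => polAux_of_iso hI n ((deltaF hI x).mapIso e) (h x)

/-- `τ_x` preserves colimits of shape `J`. -/
lemma tauF_preserves (x : C) {J : Type*} [SmallCategory J] [HasColimitsOfShape J A] :
    PreservesColimitsOfShape J (tauF A x) := by
  apply preservesColimitsOfShape_of_evaluation
  intro c
  exact preservesColimitsOfShape_of_natIso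
    (F := (evaluation C A).obj (x ⊗ c))
    (NatIso.ofComponents (fun F => Iso.refl _) (by intros; simp [tauF]))

/-- `δ_x` preserves colimits of shape `J`. -/
lemma deltaF_preserves (hI : IsInitial (𝟙_ C)) (x : C)
    {J : Type*} [SmallCategory J] [HasColimitsOfShape J A] :
    PreservesColimitsOfShape J (deltaF (A := A) hI x) := by
  have hΦ : PreservesColimitsOfShape J (parallelPair (iNT (A := A) hI x) 0).flip := by
    apply preservesColimitsOfShape_of_evaluation
    intro k
    match k with
    | WalkingParallelPair.zero =>
        exact preservesColimitsOfShape_of_natIso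
          (F := 𝟭 (C ⥤ A))
          (NatIso.ofComponents (fun F => Iso.refl _) (by intros; simp))
    | WalkingParallelPair.one =>
        haveI := tauF_preserves (A := A) x (J := J)
        exact preservesColimitsOfShape_of_natIso
          (F := tauF A x)
          (NatIso.ofComponents (fun F => Iso.refl _) (by intros; simp))
  haveI := hΦ
  exact preservesColimitsOfShape_of_natIso
    (colimitIsoFlipCompColim (parallelPair (iNT (A := A) hI x) 0)).symm

lemma polAux_colimit (hI : IsInitial (𝟙_ C))
    {J : Type*} [SmallCategory J] [HasColimitsOfShape J A] :
    ∀ (n : ℕ) (D : J ⥤ C ⥤ A), (∀ j : J, PolAux hI n (D.obj j)) →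
      PolAux hI n (colimit D)
  | 0 => fun D h => by
      show IsZero (colimit D)
      rw [IsZero.iff_id_eq_zero]
      apply colimit.hom_ext
      intro j
      simp only [Category.comp_id, comp_zero]
      exact (h j).eq_of_src _ _
  | n + 1 => fun D h x => by
      haveI := deltaF_preserves (A := A) hI x (J := J)
      exact polAux_of_iso hI n (preservesColimitIso (deltaF hI x) D).symm
        (polAux_colimit hI n (D ⋙ deltaF hI x) (fun j => h j x))

end Aux

/-- `Pol_n` is closed under colimits of shape `J`. -/
theorem pol_closed_under_colimits (hI : IsInitial (𝟙_ C))
    {J : Type*} [SmallCategory J] [HasColimitsOfShape J A]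
    (n : ℕ) (D : J ⥤ C ⥤ A) (h : ∀ j : J, Pol hI n (D.obj j)) :
    Pol hI n (colimit D) := by
  have : (↑n + 1 : ℤ).toNat = n + 1 := by omega
  unfold Pol
  rw [this]
  exact polAux_colimit hI (n + 1) D (fun j => by simpa [Pol, this] using h j)
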